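/- Let m and n be positive integers with m < n, and let ⊗ : U_m × U_n → U_{mn} be the Kronecker product homomorphism. Then for every 1 ≤ i < 2m, every x ∈ π_i(U_m) and every y ∈ π_i(U_n), one has π_i(⊗)(x,y) = n • π_i(σ_m)(x) + m • π_i(σ_n)(y) in the abelian group π_i(U_{mn}) (written additively), where σ_m : U_m → U_{mn} is A ↦ diag(A, I_{mn−m}) and σ_n : U_n → U_{mn} is B ↦ diag(B, I_{mn−n}), and • denotes integer multiples. -/

import Mathlib

open Matrix Kronecker unitInterval Topology

noncomputable section

/-- The unitary group `U_n` of `n × n` complex matrices, with the subspace topology,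
based at the identity matrix. -/
abbrev U (n : ℕ) : Type := Matrix.unitaryGroup (Fin n) ℂ

namespace Paper

/-! ### Reindexing unitary matrices -/

/-- Reindexing a unitary matrix along an equivalence of index types. -/
def uReindex {ι κ : Type} [Fintype ι] [DecidableEq ι] [Fintype κ] [DecidableEq κ]
    (e : ι ≃ κ) (A : Matrix.unitaryGroup ι ℂ) : Matrix.unitaryGroup κ ℂ :=
  ⟨Matrix.reindex e e A.1, by
    rw [Matrix.mem_unitaryGroup_iff]
    have h : star ((Matrix.reindex e e) A.1) = Matrix.reindex e e (star A.1) := by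
      simp [Matrix.star_eq_conjTranspose, Matrix.reindex_apply, Matrix.conjTranspose_submatrix]
    rw [h, Matrix.reindex_apply, Matrix.reindex_apply, Matrix.submatrix_mul_equiv, A.2.2,
      Matrix.submatrix_one_equiv]⟩

@[simp] theorem uReindex_val {ι κ : Type} [Fintype ι] [DecidableEq ι] [Fintype κ] [DecidableEq κ]
    (e : ι ≃ κ) (A : Matrix.unitaryGroup ι ℂ) :
    (uReindex e A).1 = Matrix.reindex e e A.1 := rfl

theorem continuous_uReindex {ι κ : Type} [Fintype ι] [DecidableEq ι] [Fintype κ] [DecidableEq κ]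
    (e : ι ≃ κ) : Continuous (uReindex (e := e)) :=
  Continuous.subtype_mk ((continuous_subtype_val).matrix_reindex e e) _

@[simp] theorem uReindex_one {ι κ : Type} [Fintype ι] [DecidableEq ι] [Fintype κ] [DecidableEq κ]
    (e : ι ≃ κ) : uReindex e (1 : Matrix.unitaryGroup ι ℂ) = 1 :=
  Subtype.ext (by simp [uReindex, Matrix.reindex_apply, Matrix.submatrix_one_equiv])

/-- Transport along an equality of sizes. -/
def uCast {m k : ℕ} (h : m = k) (A : U m) : U k := uReindex (finCongr h) A

theorem continuous_uCast {m k : ℕ} (h : m = k) : Continuous (uCast h) :=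
  continuous_uReindex _

@[simp] theorem uCast_one {m k : ℕ} (h : m = k) : uCast h (1 : U m) = 1 := uReindex_one _

/-! ### Block sums and Kronecker products of unitary matrices -/

/-- The block sum `diag(A, B)` of unitary matrices, as an element of `U (m + n)`. -/
def bdiag2 {m n : ℕ} (A : U m) (B : U n) : U (m + n) :=
  ⟨Matrix.reindex finSumFinEquiv finSumFinEquiv (Matrix.fromBlocks A.1 0 0 B.1), by
    rw [Matrix.mem_unitaryGroup_iff]
    have h : star ((Matrix.reindex finSumFinEquiv finSumFinEquiv)
        (Matrix.fromBlocks A.1 0 0 B.1)) = Matrix.reindex finSumFinEquiv finSumFinEquiv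
        (star (Matrix.fromBlocks A.1 0 0 B.1)) := by
      simp [Matrix.star_eq_conjTranspose, Matrix.reindex_apply, Matrix.conjTranspose_submatrix]
    have hA : A.1 * A.1ᴴ = 1 := A.2.2
    have hB : B.1 * B.1ᴴ = 1 := B.2.2
    have h2 : Matrix.fromBlocks A.1 0 0 B.1 * star (Matrix.fromBlocks A.1 0 0 B.1) = 1 := by
      simp [Matrix.star_eq_conjTranspose, Matrix.fromBlocks_conjTranspose,
        Matrix.fromBlocks_multiply, hA, hB, Matrix.fromBlocks_one]
    rw [h, Matrix.reindex_apply, Matrix.reindex_apply, Matrix.submatrix_mul_equiv, h2,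
      Matrix.submatrix_one_equiv]⟩

@[simp] theorem bdiag2_one {m n : ℕ} : bdiag2 (1 : U m) (1 : U n) = 1 :=
  Subtype.ext (by simp [bdiag2, Matrix.fromBlocks_one, Matrix.reindex_apply,
    Matrix.submatrix_one_equiv])

theorem continuous_bdiag2 {m n : ℕ} :
    Continuous (fun p : U m × U n => bdiag2 p.1 p.2) := by
  apply Continuous.subtype_mk
  exact ((Continuous.matrix_fromBlocks (continuous_subtype_val.comp continuous_fst)
    continuous_const continuous_const
    (continuous_subtype_val.comp continuous_snd)).matrix_reindex _ _)

/-- The equivalence used to index an array of `r` blocks of size `n` by `Fin (r * n)`. -/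
def bde (r n : ℕ) : (Fin n × Fin r) ≃ Fin (r * n) :=
  (Equiv.prodComm (Fin n) (Fin r)).trans finProdFinEquiv

/-- The block-diagonal sum `diag(A 1, …, A r)` of a family of unitary matrices. -/
def blockDiagU {r n : ℕ} (A : Fin r → U n) : U (r * n) :=
  ⟨Matrix.reindex (bde r n) (bde r n) (Matrix.blockDiagonal fun j => (A j).1), by
    rw [Matrix.mem_unitaryGroup_iff]
    have h : star ((Matrix.reindex (bde r n) (bde r n))
        (Matrix.blockDiagonal fun j => (A j).1)) = Matrix.reindex (bde r n) (bde r n)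
        (star (Matrix.blockDiagonal fun j => (A j).1)) := by
      simp [Matrix.star_eq_conjTranspose, Matrix.reindex_apply, Matrix.conjTranspose_submatrix]
    have hA : ∀ j, (A j).1 * ((A j).1)ᴴ = 1 := fun j => (A j).2.2
    have h2 : (Matrix.blockDiagonal fun j => (A j).1) *
        star (Matrix.blockDiagonal fun j => (A j).1) = 1 := by
      rw [Matrix.star_eq_conjTranspose, Matrix.blockDiagonal_conjTranspose,
        ← Matrix.blockDiagonal_mul]
      have h1 : (fun k : Fin r => (A k).1 * ((A k).1)ᴴ) = (1 : Fin r → Matrix (Fin n) (Fin n) ℂ) :=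
        funext fun k => hA k
      rw [h1, Matrix.blockDiagonal_one]
    rw [h, Matrix.reindex_apply, Matrix.reindex_apply, Matrix.submatrix_mul_equiv, h2,
      Matrix.submatrix_one_equiv]⟩

@[simp] theorem blockDiagU_one {r n : ℕ} : blockDiagU (fun _ : Fin r => (1 : U n)) = 1 := by
  apply Subtype.ext
  have h1 : (fun _ : Fin r => ((1 : U n) : Matrix (Fin n) (Fin n) ℂ)) =
      (1 : Fin r → Matrix (Fin n) (Fin n) ℂ) := rfl
  show Matrix.reindex (bde r n) (bde r n) (Matrix.blockDiagonal _) = _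
  rw [h1, Matrix.blockDiagonal_one, Matrix.reindex_apply, Matrix.submatrix_one_equiv]
  rfl

theorem continuous_blockDiagU {X : Type} [TopologicalSpace X] {r n : ℕ} {A : X → Fin r → U n}
    (hA : ∀ j, Continuous fun x => A x j) : Continuous fun x => blockDiagU (A x) := by
  apply Continuous.subtype_mk
  exact (Continuous.matrix_blockDiagonal
    (continuous_pi fun j => (continuous_subtype_val.comp (hA j)))).matrix_reindex _ _

/-- The Kronecker product of unitary matrices, as an element of `U (m * n)`. -/
def kronU {m n : ℕ} (A : U m) (B : U n) : U (m * n) :=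
  ⟨Matrix.reindex finProdFinEquiv finProdFinEquiv (A.1 ⊗ₖ B.1), by
    rw [Matrix.mem_unitaryGroup_iff]
    have hstar : ∀ (C : Matrix (Fin m) (Fin m) ℂ) (D : Matrix (Fin n) (Fin n) ℂ),
        star (C ⊗ₖ D) = star C ⊗ₖ star D := by
      intro C D
      ext ⟨i, j⟩ ⟨k, l⟩
      simp [Matrix.star_eq_conjTranspose, Matrix.conjTranspose_apply,
        Matrix.kroneckerMap_apply, mul_comm]
    have h : star ((Matrix.reindex finProdFinEquiv finProdFinEquiv) (A.1 ⊗ₖ B.1)) =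
        Matrix.reindex finProdFinEquiv finProdFinEquiv (star (A.1 ⊗ₖ B.1)) := by
      simp [Matrix.star_eq_conjTranspose, Matrix.reindex_apply, Matrix.conjTranspose_submatrix]
    have h2 : (A.1 ⊗ₖ B.1) * star (A.1 ⊗ₖ B.1) = 1 := by
      rw [hstar, ← Matrix.mul_kronecker_mul, A.2.2, B.2.2, Matrix.one_kronecker_one]
    rw [h, Matrix.reindex_apply, Matrix.reindex_apply, Matrix.submatrix_mul_equiv, h2,
      Matrix.submatrix_one_equiv]⟩

@[simp] theorem kronU_one {m n : ℕ} : kronU (1 : U m) (1 : U n) = 1 :=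
  Subtype.ext (by simp [kronU, Matrix.one_kronecker_one, Matrix.reindex_apply,
    Matrix.submatrix_one_equiv])

theorem continuous_kronU {m n : ℕ} : Continuous fun p : U m × U n => kronU p.1 p.2 := by
  apply Continuous.subtype_mk
  apply Continuous.matrix_reindex _ finProdFinEquiv finProdFinEquiv
  apply continuous_matrix
  rintro ⟨i, j⟩ ⟨k, l⟩
  simp only [Matrix.kroneckerMap_apply]
  exact ((continuous_subtype_val.comp continuous_fst).matrix_elem i k).mul
    ((continuous_subtype_val.comp continuous_snd).matrix_elem j l)

/-! ### The induced map on homotopy groups -/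

/-- The map on generalized loops induced by a continuous basepoint-preserving map. -/
def loopMap {N : Type} {X Y : Type} [TopologicalSpace X] [TopologicalSpace Y]
    (f : C(X, Y)) {x : X} {y : Y} (hf : f x = y) (p : GenLoop N X x) : GenLoop N Y y :=
  ⟨f.comp p.1, fun t ht => by
    simp only [ContinuousMap.comp_apply]
    rw [p.2 t ht, hf]⟩

/-- The homomorphism `π_k(f)` induced on homotopy groups (based at the given points) by a
continuous basepoint-preserving map `f`, as a function. -/
def πMap (k : ℕ) {X Y : Type} [TopologicalSpace X] [TopologicalSpace Y]
    (f : C(X, Y)) {x : X} {y : Y} (hf : f x = y) :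
    HomotopyGroup (Fin k) X x → HomotopyGroup (Fin k) Y y :=
  Quotient.map (loopMap f hf)
    (fun _ _ h => h.elim fun H => ⟨H.compContinuousMap f⟩)

end Paper
/-! ### The standard stabilization and operation maps, as continuous maps -/

namespace Paper

/-- `est_{m,n} : U_m → U_{m+n}`, `A ↦ diag(A, I_n)`. -/
def est (m n : ℕ) : C(U m, U (m + n)) :=
  ⟨fun A => bdiag2 A 1, continuous_bdiag2.comp (continuous_id.prodMk continuous_const)⟩

theorem est_one (m n : ℕ) : est m n 1 = 1 := bdiag2_one

/-- `U_n → U_{m+n}`, `B ↦ diag(I_m, B)`. -/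
def est' (m n : ℕ) : C(U n, U (m + n)) :=
  ⟨fun B => bdiag2 1 B, continuous_bdiag2.comp (continuous_const.prodMk continuous_id)⟩

theorem est'_one (m n : ℕ) : est' m n 1 = 1 := bdiag2_one

/-- `s_j : U_n → U_{rn}` placing `A` in the `j`-th diagonal block (0-indexed) and identity
blocks elsewhere. -/
def sMap (n r : ℕ) (j : Fin r) : C(U n, U (r * n)) :=
  ⟨fun A => blockDiagU (fun k => if k = j then A else 1), by
    apply continuous_blockDiagU
    intro k
    by_cases hk : k = j
    · simp only [hk, if_true]; exact continuous_id
    · simp only [hk, if_false]; exact continuous_const⟩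

theorem sMap_one (n r : ℕ) (j : Fin r) : sMap n r j 1 = 1 := by
  show blockDiagU _ = 1
  have : (fun k : Fin r => if k = j then (1 : U n) else 1) = fun _ => (1 : U n) := by
    funext k; split <;> rfl
  rw [this, blockDiagU_one]

/-- The `r`-fold direct sum `⊕^r : U_n → U_{rn}`, `A ↦ diag(A, …, A)`. -/
def rSum (n r : ℕ) : C(U n, U (r * n)) :=
  ⟨fun A => blockDiagU (fun _ : Fin r => A), continuous_blockDiagU fun _ => continuous_id⟩

theorem rSum_one (n r : ℕ) : rSum n r 1 = 1 := blockDiagU_one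

/-- The direct sum `⊕ : U_m × U_n → U_{m+n}`, `(A, B) ↦ diag(A, B)`. -/
def dsum (m n : ℕ) : C(U m × U n, U (m + n)) :=
  ⟨fun p => bdiag2 p.1 p.2, continuous_bdiag2⟩

theorem dsum_one (m n : ℕ) : dsum m n 1 = 1 := bdiag2_one

/-- The tensor (Kronecker) product `⊗ : U_m × U_n → U_{mn}`. -/
def tens (m n : ℕ) : C(U m × U n, U (m * n)) :=
  ⟨fun p => kronU p.1 p.2, continuous_kronU⟩

theorem tens_one (m n : ℕ) : tens m n 1 = 1 := kronU_one

/-- `A ↦ A ⊗ I_n : U_m → U_{mn}`. -/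
def kronR (m n : ℕ) : C(U m, U (m * n)) :=
  ⟨fun A => kronU A 1, continuous_kronU.comp (continuous_id.prodMk continuous_const)⟩

/-- `A ↦ I_n ⊗ A : U_m → U_{mn}`. -/
def kronL (m n : ℕ) : C(U m, U (m * n)) :=
  ⟨fun A => uCast (Nat.mul_comm n m) (kronU 1 A),
    (continuous_uCast _).comp (continuous_kronU.comp (continuous_const.prodMk continuous_id))⟩

/-- The stabilization `σ : U_k → U_N`, `A ↦ diag(A, I_{N-k})`, for `k ≤ N`. -/
def sigmaMap (k N : ℕ) (h : k ≤ N) : C(U k, U N) :=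
  ⟨fun A => uCast (Nat.add_sub_cancel' h) (bdiag2 A 1),
    (continuous_uCast _).comp (continuous_bdiag2.comp (continuous_id.prodMk continuous_const))⟩

theorem sigmaMap_one (k N : ℕ) (h : k ≤ N) : sigmaMap k N h 1 = 1 := by
  show uCast _ (bdiag2 1 1) = 1
  rw [bdiag2_one, uCast_one]

/-- The `r`-fold Kronecker power `A ↦ A ⊗ ⋯ ⊗ A : U_k → U_{k^r}`. -/
def kronPow {k : ℕ} : (r : ℕ) → U k → U (k ^ r)
  | 0 => fun _ => uCast (pow_zero k).symm 1
  | r + 1 => fun A => uCast (pow_succ k r).symm (kronU (kronPow r A) A)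

theorem continuous_kronPow {k : ℕ} (r : ℕ) : Continuous fun A : U k => kronPow r A := by
  induction r with
  | zero => exact continuous_const
  | succ r ih =>
    show Continuous fun A : U k => uCast (pow_succ k r).symm (kronU (kronPow r A) A)
    exact (continuous_uCast _).comp (continuous_kronU.comp (ih.prodMk continuous_id))

theorem kronPow_one {k : ℕ} (r : ℕ) : kronPow r (1 : U k) = 1 := by
  induction r with
  | zero => exact uCast_one _
  | succ r ih =>
    show uCast _ (kronU (kronPow r 1) 1) = 1
    rw [ih, kronU_one, uCast_one]

/-- The `r`-fold Kronecker power as a continuous map. -/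
def kronPowC (n r : ℕ) : C(U n, U (n ^ r)) := ⟨kronPow r, continuous_kronPow r⟩

theorem kronPowC_one (n r : ℕ) : kronPowC n r 1 = 1 := kronPow_one r

end Paper
namespace Paper


/-! ### Auxiliary material for Statement 7 -/

section AuxInstances

variable {ι κ : Type} [Fintype ι] [DecidableEq ι] [Fintype κ] [DecidableEq κ]

instance : ContinuousMul (Matrix.unitaryGroup ι ℂ) :=
  ⟨(Continuous.subtype_mk ((continuous_subtype_val.comp continuous_fst).matrix_mul
      (continuous_subtype_val.comp continuous_snd)) _ : _)⟩

instance : ContinuousStar (Matrix.unitaryGroup ι ℂ) :=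
  ⟨Continuous.subtype_mk (continuous_subtype_val.matrix_conjTranspose) _⟩

instance : IsTopologicalGroup (Matrix.unitaryGroup ι ℂ) where
  continuous_inv := by
    have : (fun u : Matrix.unitaryGroup ι ℂ => u⁻¹) = fun u => star u := rfl
    rw [this]; exact continuous_star

theorem joined_one_mul {a b : Matrix.unitaryGroup ι ℂ} (ha : Joined 1 a) (hb : Joined 1 b) :
    Joined 1 (a * b) := by
  obtain ⟨γ⟩ := ha; obtain ⟨δ⟩ := hb
  refine ⟨⟨⟨fun t => γ t * δ t, γ.continuous.mul δ.continuous⟩, ?_, ?_⟩⟩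
  · show γ 0 * δ 0 = 1
    rw [γ.source, δ.source, one_mul]
  · show γ 1 * δ 1 = a * b
    rw [γ.target, δ.target]

theorem uReindex_trans (e : ι ≃ κ) {μ : Type} [Fintype μ] [DecidableEq μ] (f : κ ≃ μ)
    (A : Matrix.unitaryGroup ι ℂ) : uReindex f (uReindex e A) = uReindex (e.trans f) A := by
  apply Subtype.ext
  simp [Matrix.reindex_apply, Matrix.submatrix_submatrix]

theorem uReindex_refl (A : Matrix.unitaryGroup ι ℂ) : uReindex (Equiv.refl ι) A = A := by
  apply Subtype.ext
  simp [Matrix.reindex_apply]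

theorem uReindex_mul (e : ι ≃ κ) (A B : Matrix.unitaryGroup ι ℂ) :
    uReindex e (A * B) = uReindex e A * uReindex e B := by
  apply Subtype.ext
  show Matrix.reindex e e (A.1 * B.1) = Matrix.reindex e e A.1 * Matrix.reindex e e B.1
  simp [Matrix.reindex_apply, Matrix.submatrix_mul_equiv]

theorem uCast_rfl {k : ℕ} (h : k = k) (A : U k) : uCast h A = A := by
  have : finCongr h = Equiv.refl (Fin k) := by ext x; simp
  rw [uCast, this, uReindex_refl]

end AuxInstances


section PermU

variable {ι : Type} [Fintype ι] [DecidableEq ι]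

/-- The permutation unitary associated to a self-equivalence of the index type. -/
def permU (e : Equiv.Perm ι) : Matrix.unitaryGroup ι ℂ :=
  ⟨e.toPEquiv.toMatrix, by
    rw [Matrix.mem_unitaryGroup_iff]
    have hstar : star (e.toPEquiv.toMatrix : Matrix ι ι ℂ) = (e.symm).toPEquiv.toMatrix := by
      ext i j
      simp only [Matrix.star_eq_conjTranspose, Matrix.conjTranspose_apply, PEquiv.toMatrix_apply,
        Equiv.toPEquiv_apply, Option.mem_def, Option.some.injEq]
      by_cases h : e.symm i = j
      · subst h; simp
      · rw [if_neg h, if_neg (fun hh => h (by rw [← hh]; simp)), star_zero]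
    rw [hstar, ← PEquiv.toMatrix_trans, ← Equiv.toPEquiv_trans]
    simp [Equiv.self_trans_symm, Equiv.toPEquiv_refl, PEquiv.toMatrix_refl]⟩

theorem star_permU (e : Equiv.Perm ι) : star (permU e) = permU e.symm := by
  apply Subtype.ext
  show star ((permU e).1) = _
  ext i j
  simp only [permU, Matrix.star_eq_conjTranspose, Matrix.conjTranspose_apply,
    PEquiv.toMatrix_apply, Equiv.toPEquiv_apply, Option.mem_def, Option.some.injEq]
  by_cases h : e.symm i = j
  · subst h; simp
  · rw [if_neg h, if_neg (fun hh => h (by rw [← hh]; simp)), star_zero]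

theorem permU_mul (e f : Equiv.Perm ι) : permU (e.trans f) = permU e * permU f := by
  apply Subtype.ext
  show (Equiv.toPEquiv (e.trans f)).toMatrix = (permU e).1 * (permU f).1
  rw [Equiv.toPEquiv_trans, PEquiv.toMatrix_trans]
  rfl

/-- Reindexing along a self-equivalence is conjugation by the permutation unitary. -/
theorem uReindex_eq_conj (e : Equiv.Perm ι) (A : Matrix.unitaryGroup ι ℂ) :
    uReindex e A = permU e.symm * A * star (permU e.symm) := by
  apply Subtype.ext
  show Matrix.reindex e e A.1 = (permU e.symm).1 * A.1 * (star (permU e.symm)).1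
  rw [show (star (permU e.symm)).1 = (permU e).1 from congrArg Subtype.val (star_permU e.symm)]
  show _ = (Equiv.toPEquiv e.symm).toMatrix * A.1 * (Equiv.toPEquiv e).toMatrix
  rw [PEquiv.toMatrix_toPEquiv_mul, PEquiv.mul_toMatrix_toPEquiv]
  simp [Matrix.reindex_apply, Matrix.submatrix_submatrix]

end PermU

section JoinedOne

variable {ι : Type} [Fintype ι] [DecidableEq ι]

theorem joined_one_of_selfadjoint (S : Matrix.unitaryGroup ι ℂ) (hS : star S.1 = S.1) :
    Joined (1 : Matrix.unitaryGroup ι ℂ) S := by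
  have hS2 : S.1 * S.1 = 1 := by
    nth_rewrite 1 [← hS]
    exact S.2.1
  -- the path `t ↦ ((1+c)/2) • 1 + ((1-c)/2) • S` with `c = exp (π t i)`
  set c : I → ℂ := fun t => Complex.exp (Real.pi * (t : ℝ) * Complex.I) with hc
  have hcont : Continuous c := by
    apply Complex.continuous_exp.comp
    fun_prop
  have hnorm : ∀ t, c t * (starRingEnd ℂ) (c t) = 1 := by
    intro t
    rw [← Complex.exp_conj, ← Complex.exp_add]
    have : (starRingEnd ℂ) ((Real.pi : ℂ) * (t : ℝ) * Complex.I) =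
        -((Real.pi : ℂ) * (t : ℝ) * Complex.I) := by
      rw [_root_.map_mul, _root_.map_mul, Complex.conj_I, Complex.conj_ofReal,
        Complex.conj_ofReal]
      ring
    rw [this, add_neg_cancel, Complex.exp_zero]
  have mem : ∀ t : I, ((1 + c t)/2) • (1 : Matrix ι ι ℂ) + ((1 - c t)/2) • S.1 ∈
      Matrix.unitaryGroup ι ℂ := by
    intro t
    rw [Matrix.mem_unitaryGroup_iff]
    have hstar : star (((1 + c t)/2) • (1 : Matrix ι ι ℂ) + ((1 - c t)/2) • S.1) =
        ((starRingEnd ℂ) ((1 + c t)/2)) • (1 : Matrix ι ι ℂ) +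
          ((starRingEnd ℂ) ((1 - c t)/2)) • S.1 := by
      rw [star_add, star_smul, star_smul, star_one, hS]
      rfl
    rw [hstar]
    rw [Matrix.add_mul, Matrix.mul_add, Matrix.mul_add, smul_mul_smul_comm, smul_mul_smul_comm,
      smul_mul_smul_comm, smul_mul_smul_comm]
    simp only [Matrix.one_mul, Matrix.mul_one, hS2]
    have expand : ∀ (x y : Matrix ι ι ℂ) (a b d e : ℂ),
        (a • x + b • y) + (d • y + e • x) = (a + e) • x + (b + d) • y := by
      intro x y a b d e
      module
    rw [expand]
    have h1 : (1 + c t)/2 * ((starRingEnd ℂ) ((1 + c t)/2)) +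
        (1 - c t)/2 * ((starRingEnd ℂ) ((1 - c t)/2)) = 1 := by
      have := hnorm t
      simp only [map_div₀, map_add, map_sub, _root_.map_one, map_ofNat]
      field_simp
      linear_combination 2 * this
    have h2 : (1 + c t)/2 * ((starRingEnd ℂ) ((1 - c t)/2)) +
        (1 - c t)/2 * ((starRingEnd ℂ) ((1 + c t)/2)) = 0 := by
      have := hnorm t
      simp only [map_div₀, map_add, map_sub, _root_.map_one, map_ofNat]
      field_simp
      linear_combination (-2 : ℂ) * this
    rw [h1, h2, one_smul, zero_smul, add_zero]
  refine ⟨⟨⟨fun t => ⟨((1 + c t)/2) • (1 : Matrix ι ι ℂ) + ((1 - c t)/2) • S.1, mem t⟩, ?_⟩,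
      ?_, ?_⟩⟩
  · apply Continuous.subtype_mk
    exact (((continuous_const.add hcont).div_const 2).smul continuous_const).add
      (((continuous_const.sub hcont).div_const 2).smul continuous_const)
  · apply Subtype.ext
    have h0 : c 0 = 1 := by simp [hc]
    show ((1 + c 0)/2) • (1 : Matrix ι ι ℂ) + ((1 - c 0)/2) • S.1 = 1
    rw [h0]
    norm_num
  · apply Subtype.ext
    have h1 : c 1 = -1 := by
      simp only [hc, Set.Icc.coe_one, Complex.ofReal_one, mul_one]
      exact Complex.exp_pi_mul_I
    show ((1 + c 1)/2) • (1 : Matrix ι ι ℂ) + ((1 - c 1)/2) • S.1 = S.1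
    rw [h1]
    norm_num

theorem joined_one_permU (e : Equiv.Perm ι) : Joined (1 : Matrix.unitaryGroup ι ℂ) (permU e) := by
  refine Equiv.Perm.swap_induction_on e ?_ ?_
  · have h1 : permU (1 : Equiv.Perm ι) = 1 := by
      apply Subtype.ext
      show (Equiv.toPEquiv (1 : Equiv.Perm ι)).toMatrix = (1 : Matrix ι ι ℂ)
      rw [show (1 : Equiv.Perm ι) = Equiv.refl ι from rfl, Equiv.toPEquiv_refl,
        PEquiv.toMatrix_refl]
    rw [h1]
  · intro f x y hxy hf
    have hmul : permU (Equiv.swap x y * f) = permU f * permU (Equiv.swap x y) := by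
      rw [← permU_mul]
      rfl
    rw [hmul]
    apply joined_one_mul hf
    apply joined_one_of_selfadjoint
    have hsymm := star_permU (Equiv.swap x y)
    have h2 : (Equiv.swap x y).symm = Equiv.swap x y := Equiv.symm_swap x y
    rw [h2] at hsymm
    exact congrArg Subtype.val hsymm

end JoinedOne

section PiTools

open Topology.Homotopy GenLoop

variable {X Y Z : Type} [TopologicalSpace X] [TopologicalSpace Y] [TopologicalSpace Z]

theorem πMap_mk {k : ℕ} (f : C(X, Y)) {x : X} {y : Y} (hf : f x = y)
    (p : GenLoop (Fin k) X x) :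
    πMap k f hf ⟦p⟧ = ⟦loopMap f hf p⟧ := rfl

theorem πMap_comp {k : ℕ} (f : C(X, Y)) (g : C(Y, Z)) {x : X} {y : Y} {z : Z}
    (hf : f x = y) (hg : g y = z) (w : HomotopyGroup (Fin k) X x) :
    πMap k (g.comp f) (by rw [ContinuousMap.comp_apply, hf, hg]) w =
      πMap k g hg (πMap k f hf w) := by
  induction w using Quotient.inductionOn with
  | h p => rfl

theorem πMap_homotopyRel {k : ℕ} {f g : C(X, Y)} {x : X} {y : Y}
    (hf : f x = y) (hg : g x = y) (F : f.HomotopyRel g {x}) (z : HomotopyGroup (Fin k) X x) :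
    πMap k f hf z = πMap k g hg z := by
  induction z using Quotient.inductionOn with
  | h p =>
    refine Quotient.sound ⟨⟨⟨⟨fun q => F (q.1, p q.2), ?_⟩, ?_, ?_⟩, ?_⟩⟩
    · exact F.continuous.comp (continuous_fst.prodMk
        (p.1.continuous.comp continuous_snd))
    · intro yy
      exact F.apply_zero (p yy)
    · intro yy
      exact F.apply_one (p yy)
    · intro t yy hyy
      have hb : p.1 yy = x := p.2 yy hyy
      show F (t, p.1 yy) = f (p.1 yy)
      rw [hb]
      exact F.prop t x rfl

variable {G H : Type} [TopologicalSpace G] [Group G] [IsTopologicalGroup G]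
  [TopologicalSpace H] [Group H] [IsTopologicalGroup H]

/-- Pointwise product of generalized loops in a topological group. -/
def ptMul {N : Type} (p q : GenLoop N G 1) : GenLoop N G 1 :=
  ⟨p.1 * q.1, fun y hy => by
    rw [ContinuousMap.mul_apply, p.2 y hy, q.2 y hy, one_mul]⟩

@[simp] theorem ptMul_apply {N : Type} (p q : GenLoop N G 1) (y : N → I) :
    ptMul p q y = p y * q y := rfl

theorem ptMul_homotopic {N : Type} {p p' q q' : GenLoop N G 1}
    (hp : GenLoop.Homotopic p p') (hq : GenLoop.Homotopic q q') :
    GenLoop.Homotopic (ptMul p q) (ptMul p' q') := by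
  obtain ⟨F⟩ := hp; obtain ⟨K⟩ := hq
  refine ⟨⟨⟨⟨fun s => F s * K s, F.continuous.mul K.continuous⟩, ?_, ?_⟩, ?_⟩⟩
  · intro yy
    show F (0, yy) * K (0, yy) = _
    rw [F.apply_zero, K.apply_zero]
    rfl
  · intro yy
    show F (1, yy) * K (1, yy) = _
    rw [F.apply_one, K.apply_one]
    rfl
  · intro t yy hyy
    have h1 : F (t, yy) = p.1 yy := F.prop t yy hyy
    have h2 : K (t, yy) = q.1 yy := K.prop t yy hyy
    show F (t, yy) * K (t, yy) = (ptMul p q).1 yy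
    rw [h1, h2]
    rfl

theorem ptMul_transAt {k : ℕ} (p q : GenLoop (Fin (k + 1)) G 1) :
    ptMul (transAt 0 const p) (transAt 0 q const) = transAt 0 q p := by
  ext y
  show (transAt 0 const p) y * (transAt 0 q const) y = (transAt 0 q p) y
  simp only [transAt, coe_copy]
  split_ifs
  · rw [const_apply, one_mul]
  · rw [const_apply, mul_one]

theorem ptMul_class {k : ℕ} (p q : GenLoop (Fin (k + 1)) G 1) :
    (⟦ptMul p q⟧ : HomotopyGroup (Fin (k + 1)) G 1) =
      ((· * ·) : _ → _ → HomotopyGroup (Fin (k + 1)) G 1) ⟦p⟧ ⟦q⟧ := by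
  have e1 : (⟦transAt 0 const p⟧ : HomotopyGroup (Fin (k + 1)) G 1) = ⟦p⟧ := by
    have h := HomotopyGroup.mul_spec (N := Fin (k + 1)) (X := G) (x := 1) (i := 0)
      (p := p) (q := const)
    rw [← h, ← HomotopyGroup.one_def]
    exact mul_one (M := HomotopyGroup (Fin (k + 1)) G 1) _
  have e2 : (⟦transAt 0 q const⟧ : HomotopyGroup (Fin (k + 1)) G 1) = ⟦q⟧ := by
    have h := HomotopyGroup.mul_spec (N := Fin (k + 1)) (X := G) (x := 1) (i := 0)
      (p := const) (q := q)
    rw [← h, ← HomotopyGroup.one_def]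
    exact one_mul (M := HomotopyGroup (Fin (k + 1)) G 1) _
  have h1 : GenLoop.Homotopic p (transAt 0 const p) := Quotient.exact e1.symm
  have h2 : GenLoop.Homotopic q (transAt 0 q const) := Quotient.exact e2.symm
  rw [HomotopyGroup.mul_spec (N := Fin (k + 1)) (X := G) (x := 1) (i := 0)
    (p := p) (q := q), ← ptMul_transAt]
  exact Quotient.sound (ptMul_homotopic h1 h2)

theorem πMap_mulMap {k : ℕ} (f g : C(X, G)) {x₀ : X} (hf : f x₀ = 1) (hg : g x₀ = 1)
    (z : HomotopyGroup (Fin (k + 1)) X x₀) :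
    πMap (k + 1) (f * g) (by rw [ContinuousMap.mul_apply, hf, hg, one_mul]) z =
      πMap (k + 1) f hf z * πMap (k + 1) g hg z := by
  induction z using Quotient.inductionOn with
  | h p =>
    exact ptMul_class (loopMap f hf p) (loopMap g hg p)

theorem πMap_oneMap {k : ℕ} {x₀ : X} (h : (1 : C(X, G)) x₀ = 1)
    (z : HomotopyGroup (Fin (k + 1)) X x₀) :
    πMap (k + 1) (1 : C(X, G)) h z = 1 := by
  induction z using Quotient.inductionOn with
  | h p =>
    rw [πMap_mk, HomotopyGroup.one_def]
    apply congrArg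
    ext y
    rfl

theorem cmListProd_apply {J : Type} (F : J → C(X, G)) (l : List J) (x : X) :
    (l.map F).prod x = (l.map fun j => F j x).prod := by
  induction l with
  | nil => rfl
  | cons a l ih =>
    simp only [List.map_cons, List.prod_cons, ContinuousMap.mul_apply, ih]

theorem πMap_listProd {k : ℕ} {J : Type} (F : J → C(X, G)) {x₀ : X}
    (hF : ∀ j, F j x₀ = 1) (l : List J) (hp : (l.map F).prod x₀ = 1)
    (z : HomotopyGroup (Fin (k + 1)) X x₀) :
    πMap (k + 1) (l.map F).prod hp z =
      (l.map fun j => πMap (k + 1) (F j) (hF j) z).prod := by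
  induction l with
  | nil =>
    simpa using πMap_oneMap (by simp) z
  | cons a l ih =>
    have hrest : (l.map F).prod x₀ = 1 := by
      rw [cmListProd_apply]
      apply List.prod_eq_one
      intro g hg
      obtain ⟨j, _, rfl⟩ := List.mem_map.mp hg
      exact hF j
    have hcons : ((a :: l).map F).prod = F a * (l.map F).prod := by
      simp [List.prod_cons]
    calc πMap (k + 1) ((a :: l).map F).prod hp z
        = πMap (k + 1) (F a * (l.map F).prod)
            (by rw [ContinuousMap.mul_apply, hF a, hrest, one_mul]) z := by
          congr 1
      _ = πMap (k + 1) (F a) (hF a) z * πMap (k + 1) (l.map F).prod hrest z :=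
          πMap_mulMap _ _ _ _ z
      _ = (((a :: l).map fun j => πMap (k + 1) (F j) (hF j) z)).prod := by
          rw [ih hrest]
          simp [List.prod_cons]

theorem list_prod_ite {M J : Type} [Monoid M] [DecidableEq J] (A : M) (l : List J)
    (hnd : l.Nodup) (k : J) (hk : k ∈ l) :
    (l.map fun j => if k = j then A else 1).prod = A := by
  induction l with
  | nil => simp at hk
  | cons a l ih =>
    rcases List.mem_cons.mp hk with rfl | hk'
    · simp only [List.map_cons, List.prod_cons]
      have h1 : (l.map fun j => if k = j then A else 1).prod = 1 := by
        apply List.prod_eq_one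
        intro g hg
        obtain ⟨j, hj, rfl⟩ := List.mem_map.mp hg
        rw [if_neg]
        rintro rfl
        exact (List.nodup_cons.mp hnd).1 hj
      simp [h1]
    · have hka : k ≠ a := by
        rintro rfl
        exact (List.nodup_cons.mp hnd).1 hk'
      simp only [List.map_cons, List.prod_cons, if_neg hka, one_mul]
      exact ih (List.nodup_cons.mp hnd).2 hk'

theorem πMap_hom_mul {k : ℕ} (φ : C(G, H)) (hφ1 : φ 1 = 1)
    (hφ : ∀ a b : G, φ (a * b) = φ a * φ b) (z w : HomotopyGroup (Fin (k + 1)) G 1) :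
    πMap (k + 1) φ hφ1 (z * w) = πMap (k + 1) φ hφ1 z * πMap (k + 1) φ hφ1 w := by
  induction z using Quotient.inductionOn with
  | h p =>
  induction w using Quotient.inductionOn with
  | h q =>
    have h2 : πMap (k + 1) φ hφ1
          (((· * ·) : _ → _ → HomotopyGroup (Fin (k + 1)) G 1) ⟦p⟧ ⟦q⟧) =
        πMap (k + 1) φ hφ1 ⟦ptMul p q⟧ :=
      congrArg _ (ptMul_class p q).symm
    refine h2.trans ?_
    refine Eq.trans ?_ (ptMul_class (loopMap φ hφ1 p) (loopMap φ hφ1 q))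
    exact congrArg _ (GenLoop.ext _ _ fun y => hφ (p y) (q y))

theorem πMap_hom_pow {k : ℕ} (φ : C(G, H)) (hφ1 : φ 1 = 1)
    (hφ : ∀ a b : G, φ (a * b) = φ a * φ b) (z : HomotopyGroup (Fin (k + 1)) G 1) (r : ℕ) :
    πMap (k + 1) φ hφ1 (z ^ r) = (πMap (k + 1) φ hφ1 z) ^ r := by
  induction r with
  | zero =>
    rw [pow_zero, pow_zero]
    have h1 : (1 : HomotopyGroup (Fin (k + 1)) G 1) = ⟦const⟧ := HomotopyGroup.one_def
    rw [h1, πMap_mk, HomotopyGroup.one_def]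
    exact congrArg _ (GenLoop.ext _ _ fun _ => hφ1)
  | succ r ih =>
    rw [pow_succ, pow_succ, πMap_hom_mul φ hφ1 hφ, ih]

end PiTools

section ConjTools

variable {ι κ : Type} [Fintype ι] [DecidableEq ι] [Fintype κ] [DecidableEq κ]
variable {X : Type} [TopologicalSpace X]

/-- Reindexing as a continuous map. -/
def uReindexC (e : ι ≃ κ) : C(Matrix.unitaryGroup ι ℂ, Matrix.unitaryGroup κ ℂ) :=
  ⟨uReindex e, continuous_uReindex e⟩

theorem πMap_uReindexC_self {k : ℕ} (e : Equiv.Perm ι) (f : C(X, Matrix.unitaryGroup ι ℂ))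
    {x₀ : X} (hf : f x₀ = 1) (h' : (uReindexC e).comp f x₀ = 1)
    (z : HomotopyGroup (Fin k) X x₀) :
    πMap k ((uReindexC e).comp f) h' z = πMap k f hf z := by
  set Q := permU e.symm with hQ
  obtain ⟨γ⟩ := joined_one_permU e.symm
  refine (πMap_homotopyRel hf h' ?_ z).symm
  refine ⟨⟨⟨fun q => γ q.1 * f q.2 * star (γ q.1), ?_⟩, ?_, ?_⟩, ?_⟩
  · exact ((γ.continuous.comp continuous_fst).mul
      (f.continuous.comp continuous_snd)).mul
      (continuous_star.comp (γ.continuous.comp continuous_fst))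
  · intro x
    show γ 0 * f x * star (γ 0) = f x
    rw [γ.source, star_one, one_mul, mul_one]
  · intro x
    show γ 1 * f x * star (γ 1) = (uReindexC e).comp f x
    rw [γ.target]
    show Q * f x * star Q = uReindex e (f x)
    rw [uReindex_eq_conj e (f x)]
  · intro t x hx
    cases hx
    show γ t * f x₀ * star (γ t) = f x₀
    rw [hf, mul_one]
    exact Unitary.mul_star_self (γ t)

end ConjTools

section MatrixBookkeeping

theorem blockDiagU_mul {r n : ℕ} (A B : Fin r → U n) :
    blockDiagU A * blockDiagU B = blockDiagU (fun j => A j * B j) := by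
  apply Subtype.ext
  show Matrix.reindex (bde r n) (bde r n) (Matrix.blockDiagonal fun j => (A j).1) *
      Matrix.reindex (bde r n) (bde r n) (Matrix.blockDiagonal fun j => (B j).1) =
      Matrix.reindex (bde r n) (bde r n) (Matrix.blockDiagonal fun j => ((A j) * (B j)).1)
  rw [Matrix.reindex_apply, Matrix.reindex_apply, Matrix.reindex_apply,
    Matrix.submatrix_mul_equiv, ← Matrix.blockDiagonal_mul]
  rfl

/-- `blockDiagU` as a monoid homomorphism. -/
def blockDiagUHom {r n : ℕ} : (Fin r → U n) →* U (r * n) where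
  toFun := blockDiagU
  map_one' := blockDiagU_one
  map_mul' := fun A B => (blockDiagU_mul A B).symm

theorem rSum_eq_listProd (n r : ℕ) :
    rSum n r = ((List.finRange r).map (fun j => sMap n r j)).prod := by
  apply ContinuousMap.ext
  intro A
  rw [cmListProd_apply]
  show blockDiagU (fun _ : Fin r => A) = _
  have h1 : (List.map (fun j => sMap n r j A) (List.finRange r)) =
      (List.map (fun F => blockDiagUHom F)
        (List.map (fun j => fun k : Fin r => if k = j then A else (1 : U n))
          (List.finRange r))) := by
    rw [List.map_map]
    rfl
  rw [h1, ← map_list_prod blockDiagUHom]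
  have h2 : (List.map (fun j => fun k : Fin r => if k = j then A else (1 : U n))
      (List.finRange r)).prod = fun _ : Fin r => A := by
    funext k
    rw [Pi.list_prod_apply k, List.map_map]
    have h3 : ((fun f : Fin r → U n => f k) ∘
        fun j => fun k : Fin r => if k = j then A else (1 : U n)) =
        fun j => if k = j then A else (1 : U n) := rfl
    rw [h3]
    exact list_prod_ite A (List.finRange r) (List.nodup_finRange r) k (List.mem_finRange k)
  rw [h2]
  rfl

theorem sMap_reindex {n r : ℕ} (j j' : Fin r) (A : U n) :
    sMap n r j A = uReindex ((bde r n).symm.trans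
      ((Equiv.prodCongr (Equiv.refl (Fin n)) (Equiv.swap j' j)).trans (bde r n)))
      (sMap n r j' A) := by
  apply Subtype.ext
  set e := (bde r n).symm.trans
      ((Equiv.prodCongr (Equiv.refl (Fin n)) (Equiv.swap j' j)).trans (bde r n)) with he
  have hsymm : ∀ (i : Fin n) (k : Fin r), e.symm (bde r n (i, k)) =
      bde r n (i, Equiv.swap j' j k) := by
    intro i k
    simp [he]
  have key : ∀ (a b : Fin n) (c d : Fin r),
      (Matrix.blockDiagonal fun l =>
        ((if l = j then A else 1 : U n) : Matrix (Fin n) (Fin n) ℂ)) (a, c) (b, d) =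
      (Matrix.blockDiagonal fun l =>
        ((if l = j' then A else 1 : U n) : Matrix (Fin n) (Fin n) ℂ))
        (a, Equiv.swap j' j c) (b, Equiv.swap j' j d) := by
    intro a b c d
    rw [Matrix.blockDiagonal_apply', Matrix.blockDiagonal_apply']
    by_cases hkk : c = d
    · subst hkk
      rw [if_pos rfl, if_pos rfl]
      by_cases hkj : c = j
      · subst hkj
        rw [if_pos rfl, if_pos (Equiv.swap_apply_right j' c)]
      · rw [if_neg hkj, if_neg (fun hsw => hkj (by
          have h5 := congrArg (Equiv.swap j' j) hsw
          rwa [Equiv.swap_apply_self, Equiv.swap_apply_left] at h5))]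
    · rw [if_neg hkk, if_neg (fun h => hkk ((Equiv.swap j' j).injective h))]
  ext x y
  obtain ⟨⟨i, k⟩, rfl⟩ := (bde r n).surjective x
  obtain ⟨⟨i', k'⟩, rfl⟩ := (bde r n).surjective y
  show (Matrix.reindex (bde r n) (bde r n) (Matrix.blockDiagonal fun l =>
      ((if l = j then A else 1 : U n) : Matrix (Fin n) (Fin n) ℂ))) _ _ =
    (Matrix.reindex e e ((Matrix.reindex (bde r n) (bde r n)) (Matrix.blockDiagonal fun l =>
      ((if l = j' then A else 1 : U n) : Matrix (Fin n) (Fin n) ℂ)))) _ _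
  simp only [Matrix.reindex_apply, Matrix.submatrix_apply, hsymm, Equiv.symm_apply_apply]
  exact key i i' k k'

end MatrixBookkeeping

section CornerLemmas

theorem sMap_zero_eq_sigmaMap (n r : ℕ) (hr : 0 < r) (hn : 0 < n) (hle : n ≤ r * n) (A : U n) :
    sMap n r ⟨0, hr⟩ A = sigmaMap n (r * n) hle A := by
  apply Subtype.ext
  set hc := Nat.add_sub_cancel' hle with hhc
  set E : (Fin n ⊕ Fin (r * n - n)) ≃ Fin (r * n) := finSumFinEquiv.trans (finCongr hc) with hE
  have hL : ∀ x y : Fin (r * n), (sMap n r ⟨0, hr⟩ A).1 x y =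
      (Matrix.blockDiagonal (fun l : Fin r =>
        ((if l = ⟨0, hr⟩ then A else 1 : U n) : Matrix (Fin n) (Fin n) ℂ)))
        (x.modNat, x.divNat) (y.modNat, y.divNat) := fun x y => rfl
  have hR : ∀ a b, (sigmaMap n (r * n) hle A).1 (E a) (E b) =
      Matrix.fromBlocks A.1 0 0 (1 : Matrix (Fin (r * n - n)) (Fin (r * n - n)) ℂ) a b := by
    intro a b
    show (Matrix.reindex (finCongr hc) (finCongr hc)
        ((Matrix.reindex finSumFinEquiv finSumFinEquiv)
          (Matrix.fromBlocks A.1 0 0 1))) (E a) (E b) = _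
    simp only [hE, Matrix.reindex_apply, Matrix.submatrix_apply, Equiv.trans_apply,
      Equiv.symm_apply_apply]
  have hvl : ∀ i : Fin n, ((E (Sum.inl i) : Fin (r * n)) : ℕ) = (i : ℕ) := by
    intro i
    simp [hE]
  have hvr : ∀ i : Fin (r * n - n), ((E (Sum.inr i) : Fin (r * n)) : ℕ) = n + (i : ℕ) := by
    intro i
    simp [hE]
  ext x y
  obtain ⟨a, rfl⟩ := E.surjective x
  obtain ⟨b, rfl⟩ := E.surjective y
  rw [hL, hR]
  rcases a with i | i <;> rcases b with j | j
  · have hdx : (E (Sum.inl i)).divNat = (⟨0, hr⟩ : Fin r) := by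
      apply Fin.ext
      rw [Fin.coe_divNat, hvl]
      exact Nat.div_eq_of_lt i.isLt
    have hdy : (E (Sum.inl j)).divNat = (⟨0, hr⟩ : Fin r) := by
      apply Fin.ext
      rw [Fin.coe_divNat, hvl]
      exact Nat.div_eq_of_lt j.isLt
    have hmx : (E (Sum.inl i)).modNat = i := by
      apply Fin.ext
      rw [Fin.coe_modNat, hvl]
      exact Nat.mod_eq_of_lt i.isLt
    have hmy : (E (Sum.inl j)).modNat = j := by
      apply Fin.ext
      rw [Fin.coe_modNat, hvl]
      exact Nat.mod_eq_of_lt j.isLt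
    rw [Matrix.blockDiagonal_apply', hdx, hdy, if_pos rfl, if_pos rfl, hmx, hmy,
      Matrix.fromBlocks_apply₁₁]
  · have hne : (E (Sum.inl i)).divNat ≠ (E (Sum.inr j)).divNat := by
      intro h
      have h1 := congrArg Fin.val h
      simp only [Fin.coe_divNat, hvl, hvr] at h1
      rw [Nat.div_eq_of_lt i.isLt, Nat.add_comm, Nat.add_div_right _ hn] at h1
      exact Nat.succ_ne_zero _ h1.symm
    rw [Matrix.blockDiagonal_apply', if_neg hne, Matrix.fromBlocks_apply₁₂]
    rfl
  · have hne : (E (Sum.inr i)).divNat ≠ (E (Sum.inl j)).divNat := by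
      intro h
      have h1 := congrArg Fin.val h
      simp only [Fin.coe_divNat, hvl, hvr] at h1
      rw [Nat.div_eq_of_lt j.isLt, Nat.add_comm, Nat.add_div_right _ hn] at h1
      exact Nat.succ_ne_zero _ h1
    rw [Matrix.blockDiagonal_apply', if_neg hne, Matrix.fromBlocks_apply₂₁]
    rfl
  · have hdvi : ((E (Sum.inr i)).divNat : ℕ) = (i : ℕ) / n + 1 := by
      rw [Fin.coe_divNat, hvr, Nat.add_comm, Nat.add_div_right _ hn]
    have hdvj : ((E (Sum.inr j)).divNat : ℕ) = (j : ℕ) / n + 1 := by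
      rw [Fin.coe_divNat, hvr, Nat.add_comm, Nat.add_div_right _ hn]
    have hmdi : ((E (Sum.inr i)).modNat : ℕ) = (i : ℕ) % n := by
      rw [Fin.coe_modNat, hvr, Nat.add_comm, Nat.add_mod_right]
    have hmdj : ((E (Sum.inr j)).modNat : ℕ) = (j : ℕ) % n := by
      rw [Fin.coe_modNat, hvr, Nat.add_comm, Nat.add_mod_right]
    have hne0 : (E (Sum.inr i)).divNat ≠ (⟨0, hr⟩ : Fin r) := by
      intro h
      have h1 := congrArg Fin.val h
      rw [hdvi] at h1
      exact Nat.succ_ne_zero _ h1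
    rw [Matrix.blockDiagonal_apply', Matrix.fromBlocks_apply₂₂]
    by_cases hij : i = j
    · subst hij
      have hone : ((1 : U n) : Matrix (Fin n) (Fin n) ℂ) = 1 := rfl
      rw [if_pos rfl, if_neg hne0, hone, Matrix.one_apply_eq, Matrix.one_apply_eq]
    · have hRne : (1 : Matrix (Fin (r * n - n)) (Fin (r * n - n)) ℂ) i j = 0 :=
        Matrix.one_apply_ne hij
      rw [hRne]
      by_cases hdiv : (E (Sum.inr i)).divNat = (E (Sum.inr j)).divNat
      · have hone : ((1 : U n) : Matrix (Fin n) (Fin n) ℂ) = 1 := rfl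
        rw [if_pos hdiv, if_neg hne0, hone]
        apply Matrix.one_apply_ne
        intro hmod
        apply hij
        have hd : (i : ℕ) / n = (j : ℕ) / n := by
          have h1 := congrArg Fin.val hdiv
          rw [hdvi, hdvj] at h1
          omega
        have hm : (i : ℕ) % n = (j : ℕ) % n := by
          have h1 := congrArg Fin.val hmod
          rwa [hmdi, hmdj] at h1
        apply Fin.ext
        have e1 := Nat.div_add_mod (i : ℕ) n
        have e2 := Nat.div_add_mod (j : ℕ) n
        rw [← e1, ← e2, hd, hm]
      · rw [if_neg hdiv]

theorem kronU_mul_kronU {m n : ℕ} (A : U m) (B : U n) :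
    kronU A (1 : U n) * kronU (1 : U m) B = kronU A B := by
  apply Subtype.ext
  show Matrix.reindex finProdFinEquiv finProdFinEquiv (A.1 ⊗ₖ (1 : Matrix (Fin n) (Fin n) ℂ)) *
      Matrix.reindex finProdFinEquiv finProdFinEquiv ((1 : Matrix (Fin m) (Fin m) ℂ) ⊗ₖ B.1) =
      Matrix.reindex finProdFinEquiv finProdFinEquiv (A.1 ⊗ₖ B.1)
  rw [Matrix.reindex_apply, Matrix.reindex_apply, Matrix.reindex_apply,
    Matrix.submatrix_mul_equiv]
  congr 1
  rw [← Matrix.mul_kronecker_mul, Matrix.mul_one, Matrix.one_mul]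

theorem kronU_one_left {m n : ℕ} (B : U n) :
    kronU (1 : U m) B = blockDiagU (fun _ : Fin m => B) := by
  apply Subtype.ext
  ext x y
  obtain ⟨⟨a, b⟩, rfl⟩ := finProdFinEquiv.surjective x
  obtain ⟨⟨a', b'⟩, rfl⟩ := finProdFinEquiv.surjective y
  have h1 : (bde m n).symm (finProdFinEquiv (a, b)) = (b, a) := by
    simp [bde]
  have h2 : (bde m n).symm (finProdFinEquiv (a', b')) = (b', a') := by
    simp [bde]
  show (Matrix.reindex finProdFinEquiv finProdFinEquiv
      ((1 : Matrix (Fin m) (Fin m) ℂ) ⊗ₖ B.1)) _ _ =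
    (Matrix.reindex (bde m n) (bde m n)
      (Matrix.blockDiagonal fun _ : Fin m => B.1)) _ _
  rw [Matrix.reindex_apply, Matrix.reindex_apply, Matrix.submatrix_apply,
    Matrix.submatrix_apply, Equiv.symm_apply_apply, Equiv.symm_apply_apply, h1, h2]
  rw [Matrix.kroneckerMap_apply, Matrix.blockDiagonal_apply', Matrix.one_apply]
  by_cases h : a = a'
  · rw [if_pos h, if_pos h, one_mul]
  · rw [if_neg h, if_neg h, zero_mul]

theorem kronU_one_right {m n : ℕ} (A : U m) :
    kronU A (1 : U n) =
      uReindex ((bde n m).symm.trans finProdFinEquiv)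
        (blockDiagU (fun _ : Fin n => A)) := by
  apply Subtype.ext
  ext x y
  obtain ⟨⟨a, b⟩, rfl⟩ := finProdFinEquiv.surjective x
  obtain ⟨⟨a', b'⟩, rfl⟩ := finProdFinEquiv.surjective y
  have hsymm : ∀ (a : Fin m) (b : Fin n),
      ((bde n m).symm.trans finProdFinEquiv).symm (finProdFinEquiv (a, b)) =
        bde n m (a, b) := by
    intro a b
    simp
  show (Matrix.reindex finProdFinEquiv finProdFinEquiv
      (A.1 ⊗ₖ (1 : Matrix (Fin n) (Fin n) ℂ))) _ _ =
    (Matrix.reindex ((bde n m).symm.trans finProdFinEquiv)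
      ((bde n m).symm.trans finProdFinEquiv)
      ((Matrix.reindex (bde n m) (bde n m))
        (Matrix.blockDiagonal fun _ : Fin n => A.1))) _ _
  simp only [Matrix.reindex_apply, Matrix.submatrix_apply, hsymm, Equiv.symm_apply_apply]
  rw [Matrix.kroneckerMap_apply, Matrix.blockDiagonal_apply', Matrix.one_apply]
  by_cases h : b = b'
  · rw [if_pos h, if_pos h, mul_one]
  · rw [if_neg h, if_neg h, mul_zero]

theorem sigmaMap_cast {k N N' : ℕ} (h : N = N') (hk : k ≤ N) (hk' : k ≤ N') (A : U k) :
    uCast h (sigmaMap k N hk A) = sigmaMap k N' hk' A := by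
  subst h
  rw [uCast_rfl]

end CornerLemmas

section Assembly

theorem πMap_congr {k : ℕ} {X Y : Type} [TopologicalSpace X] [TopologicalSpace Y]
    {f g : C(X, Y)} (h : f = g) {x : X} {y : Y} (hf : f x = y) (hg : g x = y)
    (z : HomotopyGroup (Fin k) X x) : πMap k f hf z = πMap k g hg z := by
  subst h; rfl

theorem πMap_uReindexC_cross {k : ℕ} {ι κ : Type} [Fintype ι] [DecidableEq ι] [Fintype κ]
    [DecidableEq κ] (e e' : ι ≃ κ) {X : Type} [TopologicalSpace X]
    (f : C(X, Matrix.unitaryGroup ι ℂ)) {x₀ : X} (hf : f x₀ = 1)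
    (h1 : (uReindexC e).comp f x₀ = 1) (h2 : (uReindexC e').comp f x₀ = 1)
    (z : HomotopyGroup (Fin k) X x₀) :
    πMap k ((uReindexC e).comp f) h1 z = πMap k ((uReindexC e').comp f) h2 z := by
  have hcomp : (uReindexC e).comp f =
      (uReindexC (e'.symm.trans e)).comp ((uReindexC e').comp f) := by
    apply ContinuousMap.ext
    intro x
    show uReindex e (f x) = uReindex (e'.symm.trans e) (uReindex e' (f x))
    rw [uReindex_trans, ← Equiv.trans_assoc, Equiv.self_trans_symm, Equiv.refl_trans]
  calc πMap k ((uReindexC e).comp f) h1 z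
      = πMap k ((uReindexC (e'.symm.trans e)).comp ((uReindexC e').comp f))
          (by rw [← hcomp]; exact h1) z := πMap_congr hcomp _ _ z
    _ = πMap k ((uReindexC e').comp f) h2 z :=
        πMap_uReindexC_self (e'.symm.trans e) ((uReindexC e').comp f) h2 _ z

theorem side_chain {k n r : ℕ} (hn : 0 < n) (hr : 0 < r) (hle : n ≤ r * n)
    (x : HomotopyGroup (Fin (k + 1)) (U n) 1) :
    πMap (k + 1) (rSum n r) (rSum_one n r) x =
      (πMap (k + 1) (sigmaMap n (r * n) hle) (sigmaMap_one n (r * n) hle) x) ^ r := by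
  have hprodb : (((List.finRange r).map (fun j => sMap n r j)).prod) 1 = 1 := by
    rw [← rSum_eq_listProd]
    exact rSum_one n r
  rw [πMap_congr (rSum_eq_listProd n r) (rSum_one n r) hprodb x,
    πMap_listProd (fun j => sMap n r j) (sMap_one n r) (List.finRange r) hprodb x]
  have heach : ∀ j : Fin r, πMap (k + 1) (sMap n r j) (sMap_one n r j) x =
      πMap (k + 1) (sigmaMap n (r * n) hle) (sigmaMap_one n (r * n) hle) x := by
    intro j
    set e := (bde r n).symm.trans
      ((Equiv.prodCongr (Equiv.refl (Fin n)) (Equiv.swap ⟨0, hr⟩ j)).trans (bde r n)) with he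
    have hmap : sMap n r j = (uReindexC e).comp (sMap n r ⟨0, hr⟩) := by
      apply ContinuousMap.ext
      intro A
      exact sMap_reindex j ⟨0, hr⟩ A
    have hbase : (uReindexC e).comp (sMap n r ⟨0, hr⟩) 1 = 1 := by
      rw [← hmap]
      exact sMap_one n r j
    rw [πMap_congr hmap (sMap_one n r j) hbase x,
      πMap_uReindexC_self e (sMap n r ⟨0, hr⟩) (sMap_one n r ⟨0, hr⟩) hbase x]
    exact πMap_congr (ContinuousMap.ext fun A => sMap_zero_eq_sigmaMap n r hr hn hle A) _ _ x
  have hmapeq : (List.finRange r).map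
        (fun j => πMap (k + 1) (sMap n r j) (sMap_one n r j) x) =
      (List.finRange r).map (fun _ =>
        πMap (k + 1) (sigmaMap n (r * n) hle) (sigmaMap_one n (r * n) hle) x) :=
    List.map_congr_left (fun j _ => heach j)
  rw [hmapeq, List.map_const', List.prod_replicate, List.length_finRange]

/-- `B ↦ I_m ⊗ B` without the index cast. -/
def kronLC (m n : ℕ) : C(U n, U (m * n)) :=
  ⟨fun B => kronU (1 : U m) B, continuous_kronU.comp (continuous_const.prodMk continuous_id)⟩

end Assembly

/-- Let `m < n`. For `1 ≤ i < 2m` (written `i + 1` with `i + 1 < 2m`), the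
Kronecker product `⊗ : U_m × U_n → U_{mn}` satisfies
`π_i(⊗)(x, y) = (π_i(σ_m)(x))^n · (π_i(σ_n)(y))^m` in the abelian group `π_i(U_{mn})`
(written multiplicatively; `g^k` is the `k`-th integer multiple), where
`σ_m : A ↦ diag(A, I_{mn-m})` and `σ_n : B ↦ diag(B, I_{mn-n})`. -/
theorem tens_induced_stable_formula (m n : ℕ) (hm : 0 < m) (hn : 0 < n) (hmn : m < n)
    (i : ℕ) (hi : i + 1 < 2 * m)
    (z : HomotopyGroup (Fin (i + 1)) (U m × U n) 1) :
    πMap (i + 1) (tens m n) (tens_one m n) z =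
      (πMap (i + 1) (sigmaMap m (m * n) (Nat.le_mul_of_pos_right m hn))
          (sigmaMap_one m (m * n) (Nat.le_mul_of_pos_right m hn))
          (πMap (i + 1) (ContinuousMap.fst : C(U m × U n, U m)) rfl z)) ^ n *
      (πMap (i + 1) (sigmaMap n (m * n) (Nat.le_mul_of_pos_left n hm))
          (sigmaMap_one n (m * n) (Nat.le_mul_of_pos_left n hm))
          (πMap (i + 1) (ContinuousMap.snd : C(U m × U n, U n)) rfl z)) ^ m := by
  clear hmn hi
  have hkr1 : kronR m n (1 : U m) = 1 := kronU_one
  have hkl1 : kronLC m n (1 : U n) = 1 := kronU_one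
  have hRcomp1 : ((kronR m n).comp (ContinuousMap.fst : C(U m × U n, U m)))
      (1 : U m × U n) = 1 := hkr1
  have hLcomp1 : ((kronLC m n).comp (ContinuousMap.snd : C(U m × U n, U n)))
      (1 : U m × U n) = 1 := hkl1
  have hdecomp : tens m n =
      ((kronR m n).comp (ContinuousMap.fst : C(U m × U n, U m))) *
        ((kronLC m n).comp (ContinuousMap.snd : C(U m × U n, U n))) := by
    apply ContinuousMap.ext
    intro p
    exact (kronU_mul_kronU p.1 p.2).symm
  have hmul1 : (((kronR m n).comp (ContinuousMap.fst : C(U m × U n, U m))) *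
      ((kronLC m n).comp (ContinuousMap.snd : C(U m × U n, U n)))) (1 : U m × U n) = 1 := by
    rw [← hdecomp]
    exact tens_one m n
  rw [πMap_congr hdecomp (tens_one m n) hmul1 z, πMap_mulMap _ _ hRcomp1 hLcomp1 z]
  have hsplitA : πMap (i + 1) ((kronR m n).comp ContinuousMap.fst) hRcomp1 z =
      πMap (i + 1) (kronR m n) hkr1
        (πMap (i + 1) (ContinuousMap.fst : C(U m × U n, U m)) rfl z) :=
    πMap_comp _ _ rfl hkr1 z
  have hsplitB : πMap (i + 1) ((kronLC m n).comp ContinuousMap.snd) hLcomp1 z =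
      πMap (i + 1) (kronLC m n) hkl1
        (πMap (i + 1) (ContinuousMap.snd : C(U m × U n, U n)) rfl z) :=
    πMap_comp _ _ rfl hkl1 z
  rw [hsplitA, hsplitB]
  set x := πMap (i + 1) (ContinuousMap.fst : C(U m × U n, U m)) rfl z with hx
  set y := πMap (i + 1) (ContinuousMap.snd : C(U m × U n, U n)) rfl z with hy
  -- the B side
  have hBuR : kronLC m n = rSum n m := ContinuousMap.ext fun B => kronU_one_left B
  have hB : πMap (i + 1) (kronLC m n) hkl1 y =
      (πMap (i + 1) (sigmaMap n (m * n) (Nat.le_mul_of_pos_left n hm))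
        (sigmaMap_one n (m * n) (Nat.le_mul_of_pos_left n hm)) y) ^ m := by
    rw [πMap_congr hBuR hkl1 (rSum_one n m) y]
    exact side_chain hn hm (Nat.le_mul_of_pos_left n hm) y
  -- the A side
  have hle1 : m ≤ n * m := Nat.le_mul_of_pos_left m hn
  have hA : πMap (i + 1) (kronR m n) hkr1 x =
      (πMap (i + 1) (sigmaMap m (m * n) (Nat.le_mul_of_pos_right m hn))
        (sigmaMap_one m (m * n) (Nat.le_mul_of_pos_right m hn)) x) ^ n := by
    set eNM : Fin (n * m) ≃ Fin (m * n) := (bde n m).symm.trans finProdFinEquiv with heNM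
    have hAuR : kronR m n = (uReindexC eNM).comp (rSum m n) :=
      ContinuousMap.ext fun A => kronU_one_right A
    have heNM1 : (uReindexC eNM) (1 : U (n * m)) = 1 := uReindex_one eNM
    have hcb : ((uReindexC eNM).comp (rSum m n)) (1 : U m) = 1 := by
      show uReindex eNM (rSum m n 1) = 1
      rw [rSum_one m n]
      exact uReindex_one eNM
    have hsig1 : ((uReindexC eNM).comp (sigmaMap m (n * m) hle1)) (1 : U m) = 1 := by
      show uReindex eNM (sigmaMap m (n * m) hle1 1) = 1
      rw [sigmaMap_one m (n * m) hle1]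
      exact uReindex_one eNM
    have hcast1 : ((uReindexC (finCongr (Nat.mul_comm n m))).comp
        (sigmaMap m (n * m) hle1)) (1 : U m) = 1 := by
      show uReindex (finCongr (Nat.mul_comm n m)) (sigmaMap m (n * m) hle1 1) = 1
      rw [sigmaMap_one m (n * m) hle1]
      exact uReindex_one _
    have hfinal : (uReindexC (finCongr (Nat.mul_comm n m))).comp (sigmaMap m (n * m) hle1) =
        sigmaMap m (m * n) (Nat.le_mul_of_pos_right m hn) :=
      ContinuousMap.ext fun A =>
        sigmaMap_cast (Nat.mul_comm n m) hle1 (Nat.le_mul_of_pos_right m hn) A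
    calc πMap (i + 1) (kronR m n) hkr1 x
        = πMap (i + 1) ((uReindexC eNM).comp (rSum m n)) hcb x := πMap_congr hAuR _ _ x
      _ = πMap (i + 1) (uReindexC eNM) heNM1 (πMap (i + 1) (rSum m n) (rSum_one m n) x) :=
          πMap_comp _ _ (rSum_one m n) heNM1 x
      _ = πMap (i + 1) (uReindexC eNM) heNM1
            ((πMap (i + 1) (sigmaMap m (n * m) hle1) (sigmaMap_one m (n * m) hle1) x) ^ n) := by
          rw [side_chain hm hn hle1 x]
      _ = (πMap (i + 1) (uReindexC eNM) heNM1
            (πMap (i + 1) (sigmaMap m (n * m) hle1) (sigmaMap_one m (n * m) hle1) x)) ^ n :=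
          πMap_hom_pow _ heNM1 (fun a b => uReindex_mul eNM a b) _ n
      _ = (πMap (i + 1) ((uReindexC eNM).comp (sigmaMap m (n * m) hle1)) hsig1 x) ^ n :=
          congrArg (· ^ n) (πMap_comp _ _ (sigmaMap_one m (n * m) hle1) heNM1 x).symm
      _ = (πMap (i + 1) ((uReindexC (finCongr (Nat.mul_comm n m))).comp
            (sigmaMap m (n * m) hle1)) hcast1 x) ^ n :=
          congrArg (· ^ n) (πMap_uReindexC_cross eNM (finCongr (Nat.mul_comm n m))
            (sigmaMap m (n * m) hle1) (sigmaMap_one m (n * m) hle1) hsig1 hcast1 x)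
      _ = (πMap (i + 1) (sigmaMap m (m * n) (Nat.le_mul_of_pos_right m hn))
            (sigmaMap_one m (m * n) (Nat.le_mul_of_pos_right m hn)) x) ^ n :=
          congrArg (· ^ n) (πMap_congr hfinal hcast1 _ x)
  exact congrArg₂ (· * ·) hA hB

end Paper
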